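/- For every coin sequence ε : ℕ → {-1,+1}, the set {n ∈ ℕ : ℓ_n^- = ℓ_n^+} of equality times of the self-repelling walk is infinite, and for every k ∈ ℕ one has 2k = N(k) + H_{N(k)}. -/
import Mathlib


open MeasureTheory Filter

/-- Initial local time: edge `i` denotes the half-integer edge `i + 1/2`
joining `i` and `i+1`; `aInit i = a(i + 1/2)`, which is `0` if `|i+1/2| - 1/2`
is even and `-1` if it is odd. -/
def aInit (i : ℤ) : ℤ := if Even (if 0 ≤ i then i else -i - 1) then 0 else -1

/-- State of the self-repelling walk: current position, edge local times
(`loc i` is the local time of the edge joining `i` and `i+1`, i.e. of the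
half-integer edge `i + 1/2`), and the number of coins used so far. -/
structure SRWState where
  pos : ℤ
  loc : ℤ → ℤ
  coins : ℕ

/-- One step of the self-repelling walk driven by the coin sequence `ε`. -/
def srwStep (ε : ℕ → ℤ) (s : SRWState) : SRWState :=
  let lm := s.loc (s.pos - 1)   -- ℓ_n⁻ = ℓ_n(X_n - 1/2)
  let lp := s.loc s.pos         -- ℓ_n⁺ = ℓ_n(X_n + 1/2)
  let next : ℤ := if lp < lm then s.pos + 1
    else if lm < lp then s.pos - 1
    else s.pos + ε s.coins
  { pos := next
    loc := fun i => if i = min s.pos next then s.loc i + 1 else s.loc i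
    coins := if lm = lp then s.coins + 1 else s.coins }

/-- The self-repelling walk: state after `n` steps. -/
def srw (ε : ℕ → ℤ) : ℕ → SRWState
  | 0 => ⟨0, aInit, 0⟩
  | n + 1 => srwStep ε (srw ε n)

/-- Position `X_n` of the self-repelling walk. -/
def Xwalk (ε : ℕ → ℤ) (n : ℕ) : ℤ := (srw ε n).pos

/-- Edge local time `ℓ_n(i + 1/2)`. -/
def ellEdge (ε : ℕ → ℤ) (n : ℕ) (i : ℤ) : ℤ := (srw ε n).loc i

/-- `ℓ_n⁻ = ℓ_n(X_n - 1/2)`. -/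
def ellMinus (ε : ℕ → ℤ) (n : ℕ) : ℤ := ellEdge ε n (Xwalk ε n - 1)

/-- `ℓ_n⁺ = ℓ_n(X_n + 1/2)`. -/
def ellPlus (ε : ℕ → ℤ) (n : ℕ) : ℤ := ellEdge ε n (Xwalk ε n)

/-- `n` is an equality time: `ℓ_n⁻ = ℓ_n⁺`. -/
def IsEqTime (ε : ℕ → ℤ) (n : ℕ) : Prop := ellMinus ε n = ellPlus ε n

/-- `N(k)`: the `(k+1)`-st smallest equality time. -/
noncomputable def timeN (ε : ℕ → ℤ) (k : ℕ) : ℕ := Nat.nth (IsEqTime ε) k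

/-- `H_n = (ℓ_n⁻ + ℓ_n⁺)/2`. -/
def Hheight (ε : ℕ → ℤ) (n : ℕ) : ℤ := (ellMinus ε n + ellPlus ε n) / 2

/-- `ã(x)`: `0` for even `x`, `-1` for odd `x`. -/
def aTilde (x : ℤ) : ℤ := if Even x then 0 else -1

/-- Modified local time `ℓ~_n(x)`: equals `ℓ_n(x - 1/2)` for `x ≤ X_n` and
`ℓ_n(x + 1/2)` for `x > X_n`. -/
def modLoc (ε : ℕ → ℤ) (n : ℕ) (x : ℤ) : ℤ :=
  if x ≤ Xwalk ε n then ellEdge ε n (x - 1) else ellEdge ε n x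

/-- Area `𝒜(f) = Σ_x (f(x) - ã(x))` between `f` and `ã`. -/
noncomputable def areaA (f : ℤ → ℤ) : ℤ := ∑ᶠ x : ℤ, (f x - aTilde x)

/-- `m₋(f) = 1 + max {x ≤ 0 : f x = -1}`. -/
noncomputable def mMinus (f : ℤ → ℤ) : ℤ := 1 + sSup {x : ℤ | x ≤ 0 ∧ f x = -1}

/-- `m₊(f) = -1 + min {x ≥ 0 : f x = -1}`. -/
noncomputable def mPlus (f : ℤ → ℤ) : ℤ := -1 + sInf {x : ℤ | 0 ≤ x ∧ f x = -1}

/-- `O(f)`: the number of zeros of `f` strictly between `m₋(f)` and `m₊(f)`. -/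
noncomputable def nZeros (f : ℤ → ℤ) : ℕ :=
  {x : ℤ | mMinus f < x ∧ x < mPlus f ∧ f x = 0}.ncard

/-- `o₊ = max {x < m₊(f) : f x = 0}`. -/
noncomputable def oPlus (f : ℤ → ℤ) : ℤ := sSup {x : ℤ | x < mPlus f ∧ f x = 0}

/-- `o₋ = min {x > m₋(f) : f x = 0}`. -/
noncomputable def oMinus (f : ℤ → ℤ) : ℤ := sInf {x : ℤ | mMinus f < x ∧ f x = 0}

open Classical in
/-- The admissible interval `I(f)`. -/
noncomputable def interI (f : ℤ → ℤ) : Set ℤ :=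
  if f = aTilde then {0}
  else if nZeros f = 0 then Set.Icc (mMinus f) (mPlus f)
  else if 0 < oPlus f then Set.Ioc (oPlus f) (mPlus f)
  else Set.Ico (mMinus f) (oMinus f)

/-- Coins as `±1`-valued integers from booleans. -/
def coin (ω : ℕ → Bool) (j : ℕ) : ℤ := if ω j then 1 else -1

/-! ### Auxiliary lemmas for statement0 -/

lemma aInit_ge (i : ℤ) : -1 ≤ aInit i := by
  unfold aInit; split <;> omega

lemma aInit_step (i : ℤ) (hi : i ≠ -1) :
    aInit (i + 1) = aInit i + 1 ∨ aInit (i + 1) = aInit i - 1 := by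
  unfold aInit
  simp only [Int.even_iff]
  split_ifs <;> omega

lemma srwStep_pos (ε : ℕ → ℤ) (s : SRWState) : (srwStep ε s).pos =
    (if s.loc s.pos < s.loc (s.pos - 1) then s.pos + 1
      else if s.loc (s.pos - 1) < s.loc s.pos then s.pos - 1
      else s.pos + ε s.coins) := rfl

lemma srwStep_loc (ε : ℕ → ℤ) (s : SRWState) (i : ℤ) : (srwStep ε s).loc i =
    (if i = min s.pos (srwStep ε s).pos then s.loc i + 1 else s.loc i) := rfl

lemma srwStep_coins (ε : ℕ → ℤ) (s : SRWState) : (srwStep ε s).coins =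
    (if s.loc (s.pos - 1) = s.loc s.pos then s.coins + 1 else s.coins) := rfl

/-- The full invariant of the walk. -/
def SRWInv (ε : ℕ → ℤ) (n : ℕ) : Prop :=
  (∀ i : ℤ, i ≠ (srw ε n).pos - 1 →
      (srw ε n).loc (i + 1) = (srw ε n).loc i + 1 ∨
      (srw ε n).loc (i + 1) = (srw ε n).loc i - 1) ∧
  ((srw ε n).loc ((srw ε n).pos - 1) = (srw ε n).loc (srw ε n).pos ∨
   (srw ε n).loc ((srw ε n).pos - 1) = (srw ε n).loc (srw ε n).pos + 2 ∨
   (srw ε n).loc (srw ε n).pos = (srw ε n).loc ((srw ε n).pos - 1) + 2) ∧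
  ((n : ℤ) + max ((srw ε n).loc ((srw ε n).pos - 1)) ((srw ε n).loc (srw ε n).pos)
      = 2 * ((srw ε n).coins : ℤ))

lemma srwInv_zero (ε : ℕ → ℤ) : SRWInv ε 0 := by
  refine ⟨?_, ?_, ?_⟩
  · intro i hi
    have h0 : (srw ε 0).pos = 0 := rfl
    rw [h0] at hi
    exact aInit_step i (by omega)
  · show aInit ((0:ℤ) - 1) = aInit 0 ∨ _
    left; decide
  · show (0:ℤ) + max (aInit ((0:ℤ) - 1)) (aInit 0) = 2 * ((0:ℕ) : ℤ)
    decide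

lemma srwInv_succ (ε : ℕ → ℤ) (hε : ∀ j, ε j = 1 ∨ ε j = -1) (n : ℕ)
    (ih : SRWInv ε n) : SRWInv ε (n + 1) := by
  obtain ⟨hA, hB, hC⟩ := ih
  set s := srw ε n with hs
  have h1 : srw ε (n + 1) = srwStep ε s := rfl
  -- determine the direction of the move
  have hdir : (srw ε (n+1)).pos = s.pos + 1 ∨ (srw ε (n+1)).pos = s.pos - 1 := by
    rw [h1, srwStep_pos]
    split_ifs with h h'
    · left; rfl
    · right; rfl
    · rcases hε s.coins with h2 | h2 <;> rw [h2] <;> [left; right] <;> ring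
  rcases hdir with hp | hp
  · -- move right: incremented edge is s.pos
    have hmin : min s.pos (srw ε (n+1)).pos = s.pos := by rw [hp]; omega
    have hloc : ∀ i : ℤ, (srw ε (n+1)).loc i =
        if i = s.pos then s.loc i + 1 else s.loc i := by
      intro i; rw [h1, srwStep_loc]; rw [← h1, hmin]
    -- right move implies ℓ⁻ ≥ ℓ⁺
    have hge : s.loc s.pos ≤ s.loc (s.pos - 1) := by
      by_contra hcon
      push_neg at hcon
      have : (srw ε (n+1)).pos = s.pos - 1 := by
        rw [h1, srwStep_pos, if_neg (by omega), if_pos hcon]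
      omega
    have hnb : s.loc (s.pos + 1) = s.loc s.pos + 1 ∨
        s.loc (s.pos + 1) = s.loc s.pos - 1 := hA s.pos (by omega)
    refine ⟨?_, ?_, ?_⟩
    · intro i hi
      rw [hp] at hi
      rw [hloc, hloc]
      rcases eq_or_ne i (s.pos - 1) with rfl | hi1
      · rw [if_pos (by omega), if_neg (by omega)]
        have : s.pos - 1 + 1 = s.pos := by omega
        rw [this]
        rcases hB with h | h | h <;> omega
      · rw [if_neg (by omega), if_neg (by omega)]
        exact hA i hi1
    · have e1 : (srw ε (n+1)).pos - 1 = s.pos := by omega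
      rw [e1, hp, hloc, hloc, if_pos rfl, if_neg (by omega)]
      rcases hnb with h | h <;> omega
    · have e1 : (srw ε (n+1)).pos - 1 = s.pos := by omega
      have hcoins : ((srw ε (n+1)).coins : ℤ) =
          if s.loc (s.pos - 1) = s.loc s.pos then (s.coins : ℤ) + 1 else (s.coins : ℤ) := by
        rw [h1, srwStep_coins]; split_ifs <;> simp
      rw [e1, hp, hloc, hloc, if_pos rfl, if_neg (by omega), hcoins]
      push_cast
      split_ifs with h <;> rcases hB with h2 | h2 | h2 <;> rcases hnb with h3 | h3 <;> omega
  · -- move left: incremented edge is s.pos - 1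
    have hmin : min s.pos (srw ε (n+1)).pos = s.pos - 1 := by rw [hp]; omega
    have hloc : ∀ i : ℤ, (srw ε (n+1)).loc i =
        if i = s.pos - 1 then s.loc i + 1 else s.loc i := by
      intro i; rw [h1, srwStep_loc]; rw [← h1, hmin]
    have hge : s.loc (s.pos - 1) ≤ s.loc s.pos := by
      by_contra hcon
      push_neg at hcon
      have : (srw ε (n+1)).pos = s.pos + 1 := by
        rw [h1, srwStep_pos, if_pos hcon]
      omega
    have hnb : s.loc (s.pos - 1) = s.loc (s.pos - 2) + 1 ∨
        s.loc (s.pos - 1) = s.loc (s.pos - 2) - 1 := by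
      have := hA (s.pos - 2) (by omega)
      have e : s.pos - 2 + 1 = s.pos - 1 := by omega
      rw [e] at this
      exact this
    refine ⟨?_, ?_, ?_⟩
    · intro i hi
      rw [hp] at hi
      rw [hloc, hloc]
      rcases eq_or_ne i (s.pos - 1) with rfl | hi1
      · rw [if_neg (by omega), if_pos rfl]
        have : s.pos - 1 + 1 = s.pos := by omega
        rw [this]
        rcases hB with h | h | h <;> omega
      · rw [if_neg (by omega), if_neg (by omega)]
        exact hA i hi1
    · have e1 : (srw ε (n+1)).pos - 1 = s.pos - 2 := by omega
      rw [e1, hp, hloc, hloc, if_neg (by omega), if_pos rfl]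
      rcases hnb with h | h <;> omega
    · have e1 : (srw ε (n+1)).pos - 1 = s.pos - 2 := by omega
      have hcoins : ((srw ε (n+1)).coins : ℤ) =
          if s.loc (s.pos - 1) = s.loc s.pos then (s.coins : ℤ) + 1 else (s.coins : ℤ) := by
        rw [h1, srwStep_coins]; split_ifs <;> simp
      rw [e1, hp, hloc, hloc, if_neg (by omega), if_pos rfl, hcoins]
      push_cast
      split_ifs with h <;> rcases hB with h2 | h2 | h2 <;> rcases hnb with h3 | h3 <;> omega

lemma srwInv (ε : ℕ → ℤ) (hε : ∀ j, ε j = 1 ∨ ε j = -1) (n : ℕ) : SRWInv ε n := by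
  induction n with
  | zero => exact srwInv_zero ε
  | succ n ih => exact srwInv_succ ε hε n ih

lemma srw_loc_ge (ε : ℕ → ℤ) (n : ℕ) (i : ℤ) : -1 ≤ (srw ε n).loc i := by
  induction n with
  | zero => exact aInit_ge i
  | succ n ih =>
      have : srw ε (n+1) = srwStep ε (srw ε n) := rfl
      rw [this, srwStep_loc]
      split_ifs <;> omega

lemma isEqTime_iff (ε : ℕ → ℤ) (n : ℕ) :
    IsEqTime ε n ↔ (srw ε n).loc ((srw ε n).pos - 1) = (srw ε n).loc (srw ε n).pos :=
  Iff.rfl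

open Classical in
lemma srw_coins_eq_count (ε : ℕ → ℤ) (n : ℕ) :
    (srw ε n).coins = Nat.count (IsEqTime ε) n := by
  induction n with
  | zero => rfl
  | succ n ih =>
      have h1 : srw ε (n+1) = srwStep ε (srw ε n) := rfl
      rw [h1, srwStep_coins, Nat.count_succ, ih]
      by_cases h : IsEqTime ε n
      · rw [if_pos ((isEqTime_iff ε n).mp h), if_pos h]
      · rw [if_neg (fun hc => h ((isEqTime_iff ε n).mpr hc)), if_neg h]
        omega

open Classical in
lemma eqTimes_infinite (ε : ℕ → ℤ) (hε : ∀ j, ε j = 1 ∨ ε j = -1) :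
    {n : ℕ | IsEqTime ε n}.Infinite := by
  by_contra hfin
  rw [Set.not_infinite] at hfin
  set c := hfin.toFinset.card with hc
  have hcount : ∀ n, Nat.count (IsEqTime ε) n ≤ c := by
    intro n
    rw [Nat.count_eq_card_filter_range]
    apply Finset.card_le_card
    intro x hx
    rw [Finset.mem_filter] at hx
    rw [Set.Finite.mem_toFinset]
    exact hx.2
  have hinv := (srwInv ε hε (2 * c + 2)).2.2
  have hge1 := srw_loc_ge ε (2 * c + 2) ((srw ε (2 * c + 2)).pos - 1)
  have hge2 := srw_loc_ge ε (2 * c + 2) ((srw ε (2 * c + 2)).pos)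
  have hcoins := srw_coins_eq_count ε (2 * c + 2)
  have hle := hcount (2 * c + 2)
  set M := max ((srw ε (2*c+2)).loc ((srw ε (2*c+2)).pos - 1))
      ((srw ε (2*c+2)).loc (srw ε (2*c+2)).pos) with hM
  have hMge : -1 ≤ M := le_trans hge1 (le_max_left _ _)
  rw [hcoins] at hinv
  push_cast at hinv
  omega

/-- For every coin sequence `ε : ℕ → {-1,+1}`, the set of equality
times `{n : ℓ_n⁻ = ℓ_n⁺}` is infinite, and for every `k`, `2k = N(k) + H_{N(k)}`. -/
theorem statement0 (ε : ℕ → ℤ) (hε : ∀ j, ε j = 1 ∨ ε j = -1) :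
    {n : ℕ | IsEqTime ε n}.Infinite ∧
      ∀ k : ℕ, (2 * k : ℤ) = (timeN ε k : ℤ) + Hheight ε (timeN ε k) := by

  classical
  have hinf := eqTimes_infinite ε hε
  refine ⟨hinf, fun k => ?_⟩
  set n := timeN ε k with hn
  have hmem : IsEqTime ε n := Nat.nth_mem_of_infinite hinf k
  have hcnt : Nat.count (IsEqTime ε) n = k := Nat.count_nth_of_infinite hinf k
  have hC := (srwInv ε hε n).2.2
  have hcoins := srw_coins_eq_count ε n
  have heq : (srw ε n).loc ((srw ε n).pos - 1) = (srw ε n).loc (srw ε n).pos :=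
    (isEqTime_iff ε n).mp hmem
  have e1 : ellMinus ε n = (srw ε n).loc ((srw ε n).pos - 1) := rfl
  have e2 : ellPlus ε n = (srw ε n).loc (srw ε n).pos := rfl
  have hH : Hheight ε n = (srw ε n).loc ((srw ε n).pos - 1) := by
    unfold Hheight
    rw [e1, e2, ← heq]
    omega
  rw [max_eq_left (le_of_eq heq.symm), hcoins, hcnt] at hC
  rw [hH]
  omega
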